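/- Let A{_τ×_σ}B be a smash biproduct bialgebra with σ both left conormal (Σ a_σε_B(b_σ)=aε_B(b)) and right conormal (Σ ε_A(a_σ)b_σ=ε_A(a)b). Then σ is the tensor flip: σ(b⊗a) = a⊗b for all a∈A, b∈B. -/

import Mathlib

open TensorProduct

noncomputable section

variable (k : Type*) [Field k]

/-- Componentwise multiplication on `H ⊗ H` induced by a multiplication map `m` on `H`. -/
def mul2 (H : Type*) [AddCommGroup H] [Module k H] (m : H ⊗[k] H →ₗ[k] H) :
    (H ⊗[k] H) ⊗[k] (H ⊗[k] H) →ₗ[k] H ⊗[k] H :=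
  (TensorProduct.map m m) ∘ₗ (TensorProduct.tensorTensorTensorComm k H H H H).toLinearMap

/-- Componentwise multiplication on `H ⊗ (H ⊗ H)`. -/
def mul3 (H : Type*) [AddCommGroup H] [Module k H] (m : H ⊗[k] H →ₗ[k] H) :
    (H ⊗[k] (H ⊗[k] H)) ⊗[k] (H ⊗[k] (H ⊗[k] H)) →ₗ[k] H ⊗[k] (H ⊗[k] H) :=
  (TensorProduct.map m (mul2 k H m)) ∘ₗ
    (TensorProduct.tensorTensorTensorComm k H (H ⊗[k] H) H (H ⊗[k] H)).toLinearMap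

/-- `R ∈ H ⊗ H` is a quasitriangular structure with respect to the bialgebra
structure data `(m, Δ, e, ε)` on `H`:
(QT1) `(ε⊗id)(R) = e = (id⊗ε)(R)`, (QT2) `(Δ⊗id)(R) = R₁₃R₂₃`,
(QT3) `(id⊗Δ)(R) = R₁₃R₁₂`, (QT4) `RΔ(h) = Δᶜᵒᵖ(h)R`. -/
def IsQT (H : Type*) [AddCommGroup H] [Module k H]
    (m : H ⊗[k] H →ₗ[k] H) (Δ : H →ₗ[k] H ⊗[k] H) (e : H) (ε : H →ₗ[k] k)
    (R : H ⊗[k] H) : Prop :=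
  (TensorProduct.lid k H) ((LinearMap.rTensor H ε) R) = e ∧
  (TensorProduct.rid k H) ((LinearMap.lTensor H ε) R) = e ∧
  (TensorProduct.assoc k H H H).toLinearMap ((LinearMap.rTensor H Δ) R) =
    mul3 k H m (((LinearMap.lTensor H (TensorProduct.mk k H H e)) R) ⊗ₜ[k] (e ⊗ₜ[k] R)) ∧
  (LinearMap.lTensor H Δ) R =
    mul3 k H m (((LinearMap.lTensor H (TensorProduct.mk k H H e)) R) ⊗ₜ[k]
      ((LinearMap.lTensor H ((TensorProduct.mk k H H).flip e)) R)) ∧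
  ∀ h : H, mul2 k H m (R ⊗ₜ[k] Δ h) =
    mul2 k H m ((TensorProduct.comm k H H (Δ h)) ⊗ₜ[k] R)

variable (A B : Type*)
  [Ring A] [Algebra k A] [Coalgebra k A]
  [Ring B] [Algebra k B] [Coalgebra k B]

variable (σ : B ⊗[k] A →ₗ[k] A ⊗[k] B) (τ : A ⊗[k] B →ₗ[k] B ⊗[k] A)

/-- The smash product multiplication `(a⊗b)(a'⊗b') = Σ aa'_σ ⊗ b_σ b'` on `A ⊗ B`. -/
def smashMul : (A ⊗[k] B) ⊗[k] (A ⊗[k] B) →ₗ[k] A ⊗[k] B :=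
  (TensorProduct.map (LinearMap.mul' k A) (LinearMap.mul' k B))
    ∘ₗ (TensorProduct.assoc k A A (B ⊗[k] B)).symm.toLinearMap
    ∘ₗ (TensorProduct.map LinearMap.id
         ((TensorProduct.assoc k A B B).toLinearMap
           ∘ₗ (TensorProduct.map σ LinearMap.id)
           ∘ₗ (TensorProduct.assoc k B A B).symm.toLinearMap))
    ∘ₗ (TensorProduct.assoc k A B (A ⊗[k] B)).toLinearMap

/-- The smash coproduct comultiplication `Δ(a⊗b) = Σ a₍₁₎ ⊗ b₍₁₎τ ⊗ a₍₂₎τ ⊗ b₍₂₎` on `A ⊗ B`. -/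
def smashComul : A ⊗[k] B →ₗ[k] (A ⊗[k] B) ⊗[k] (A ⊗[k] B) :=
  (TensorProduct.assoc k A B (A ⊗[k] B)).symm.toLinearMap
    ∘ₗ (TensorProduct.map LinearMap.id
         ((TensorProduct.assoc k B A B).toLinearMap
           ∘ₗ (TensorProduct.map τ LinearMap.id)
           ∘ₗ (TensorProduct.assoc k A B B).symm.toLinearMap))
    ∘ₗ (TensorProduct.assoc k A A (B ⊗[k] B)).toLinearMap
    ∘ₗ (TensorProduct.map (Coalgebra.comul : A →ₗ[k] A ⊗[k] A)
          (Coalgebra.comul : B →ₗ[k] B ⊗[k] B))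

/-- The counit `ε_A ⊗ ε_B` of `A ⊗ B`. -/
def smashCounit : A ⊗[k] B →ₗ[k] k :=
  (LinearMap.mul' k k) ∘ₗ
    TensorProduct.map (Coalgebra.counit : A →ₗ[k] k) (Coalgebra.counit : B →ₗ[k] k)

/-- The projection `π_A = id_A ⊗ ε_B`. -/
def piA : A ⊗[k] B →ₗ[k] A :=
  (TensorProduct.rid k A).toLinearMap ∘ₗ LinearMap.lTensor A (Coalgebra.counit : B →ₗ[k] k)

/-- The projection `π_B = ε_A ⊗ id_B`. -/
def piB : A ⊗[k] B →ₗ[k] B :=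
  (TensorProduct.lid k B).toLinearMap ∘ₗ LinearMap.rTensor B (Coalgebra.counit : A →ₗ[k] k)

/-- `A {_τ×_σ} B` is a smash biproduct bialgebra. -/
structure IsSmashBiproduct : Prop where
  mul_assoc : ∀ x y z : A ⊗[k] B,
    smashMul k A B σ ((smashMul k A B σ (x ⊗ₜ[k] y)) ⊗ₜ[k] z)
      = smashMul k A B σ (x ⊗ₜ[k] (smashMul k A B σ (y ⊗ₜ[k] z)))
  one_mul : ∀ x : A ⊗[k] B, smashMul k A B σ (((1:A) ⊗ₜ[k] (1:B)) ⊗ₜ[k] x) = x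
  mul_one : ∀ x : A ⊗[k] B, smashMul k A B σ (x ⊗ₜ[k] ((1:A) ⊗ₜ[k] (1:B))) = x
  sigma_one_left : ∀ b : B, σ (b ⊗ₜ[k] (1:A)) = (1:A) ⊗ₜ[k] b
  sigma_one_right : ∀ a : A, σ ((1:B) ⊗ₜ[k] a) = a ⊗ₜ[k] (1:B)
  comul_coassoc : ∀ x : A ⊗[k] B,
    (TensorProduct.assoc k (A ⊗[k] B) (A ⊗[k] B) (A ⊗[k] B)).toLinearMap
        ((LinearMap.rTensor (A ⊗[k] B) (smashComul k A B τ)) (smashComul k A B τ x))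
      = (LinearMap.lTensor (A ⊗[k] B) (smashComul k A B τ)) (smashComul k A B τ x)
  counit_comul : ∀ x : A ⊗[k] B,
    (TensorProduct.lid k (A ⊗[k] B))
        ((LinearMap.rTensor (A ⊗[k] B) (smashCounit k A B)) (smashComul k A B τ x)) = x
  comul_counit : ∀ x : A ⊗[k] B,
    (TensorProduct.rid k (A ⊗[k] B))
        ((LinearMap.lTensor (A ⊗[k] B) (smashCounit k A B)) (smashComul k A B τ x)) = x
  tau_counit_left : ∀ (a : A) (b : B),
    (TensorProduct.lid k A)
        ((LinearMap.rTensor A (Coalgebra.counit : B →ₗ[k] k)) (τ (a ⊗ₜ[k] b)))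
      = (Coalgebra.counit : B →ₗ[k] k) b • a
  tau_counit_right : ∀ (a : A) (b : B),
    (TensorProduct.rid k B)
        ((LinearMap.lTensor B (Coalgebra.counit : A →ₗ[k] k)) (τ (a ⊗ₜ[k] b)))
      = (Coalgebra.counit : A →ₗ[k] k) a • b
  comul_mul : ∀ x y : A ⊗[k] B,
    smashComul k A B τ (smashMul k A B σ (x ⊗ₜ[k] y))
      = mul2 k (A ⊗[k] B) (smashMul k A B σ)
          ((smashComul k A B τ x) ⊗ₜ[k] (smashComul k A B τ y))
  comul_one : smashComul k A B τ ((1:A) ⊗ₜ[k] (1:B))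
      = ((1:A) ⊗ₜ[k] (1:B)) ⊗ₜ[k] ((1:A) ⊗ₜ[k] (1:B))
  counit_mul : ∀ x y : A ⊗[k] B,
    smashCounit k A B (smashMul k A B σ (x ⊗ₜ[k] y)) = smashCounit k A B x * smashCounit k A B y
  counit_one : smashCounit k A B ((1:A) ⊗ₜ[k] (1:B)) = 1

/-- `σ` is right conormal: `(ε_A ⊗ id_B) ∘ σ = id_B ⊗ ε_A`. -/
def RightConormal : Prop := ∀ (b : B) (a : A),
  (TensorProduct.lid k B)
      ((LinearMap.rTensor B (Coalgebra.counit : A →ₗ[k] k)) (σ (b ⊗ₜ[k] a)))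
    = (Coalgebra.counit : A →ₗ[k] k) a • b

/-- `σ` is left conormal: `(id_A ⊗ ε_B) ∘ σ = ε_B ⊗ id_A`. -/
def LeftConormal : Prop := ∀ (b : B) (a : A),
  (TensorProduct.rid k A)
      ((LinearMap.lTensor A (Coalgebra.counit : B →ₗ[k] k)) (σ (b ⊗ₜ[k] a)))
    = (Coalgebra.counit : B →ₗ[k] k) b • a

/-- `τ` is left normal: `τ(a ⊗ 1_B) = 1_B ⊗ a`. -/
def LeftNormal : Prop := ∀ a : A, τ (a ⊗ₜ[k] (1:B)) = (1:B) ⊗ₜ[k] a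

/-- `τ` is right normal: `τ(1_A ⊗ b) = b ⊗ 1_A`. -/
def RightNormal : Prop := ∀ b : B, τ ((1:A) ⊗ₜ[k] b) = b ⊗ₜ[k] (1:A)

set_option maxHeartbeats 1000000
set_option synthInstance.maxHeartbeats 400000

section Helpers

lemma piA_tmul (a : A) (b : B) :
    piA k A B (a ⊗ₜ[k] b) = ((Coalgebra.counit : B →ₗ[k] k) b) • a := by
  simp [piA]

lemma piB_tmul (a : A) (b : B) :
    piB k A B (a ⊗ₜ[k] b) = ((Coalgebra.counit : A →ₗ[k] k) a) • b := by
  simp [piB]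

lemma smashCounit_tmul (a : A) (b : B) :
    smashCounit k A B (a ⊗ₜ[k] b)
      = (Coalgebra.counit : A →ₗ[k] k) a * (Coalgebra.counit : B →ₗ[k] k) b := by
  simp [smashCounit]

lemma smashMul_tmul (a a' : A) (b b' : B) :
    smashMul k A B σ ((a ⊗ₜ[k] b) ⊗ₜ[k] (a' ⊗ₜ[k] b'))
      = TensorProduct.map (LinearMap.mulLeft k a) (LinearMap.mulRight k b')
          (σ (b ⊗ₜ[k] a')) := by
  unfold smashMul
  simp only [LinearMap.coe_comp, Function.comp_apply, LinearEquiv.coe_coe,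
    TensorProduct.assoc_tmul, TensorProduct.map_tmul, LinearMap.id_coe, id_eq,
    TensorProduct.assoc_symm_tmul]
  generalize σ (b ⊗ₜ[k] a') = c
  induction c using TensorProduct.induction_on with
  | zero => simp
  | tmul x y => simp [LinearMap.mul'_apply]
  | add x y hx hy =>
      simp only [add_tmul, tmul_add, map_add] at *
      rw [hx, hy]

lemma counit_one_eq (hsb : IsSmashBiproduct k A B σ τ) :
    (Coalgebra.counit : A →ₗ[k] k) 1 * (Coalgebra.counit : B →ₗ[k] k) 1 = 1 := by
  have h := hsb.counit_one
  rwa [smashCounit_tmul] at h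

lemma counitB_mul (hsb : IsSmashBiproduct k A B σ τ) (b b' : B) :
    (Coalgebra.counit : B →ₗ[k] k) (b * b')
      = (Coalgebra.counit : A →ₗ[k] k) 1 *
        ((Coalgebra.counit : B →ₗ[k] k) b * (Coalgebra.counit : B →ₗ[k] k) b') := by
  have h := hsb.counit_mul ((1:A) ⊗ₜ[k] b) ((1:A) ⊗ₜ[k] b')
  rw [smashMul_tmul, hsb.sigma_one_left, TensorProduct.map_tmul] at h
  simp only [LinearMap.mulLeft_apply, LinearMap.mulRight_apply, one_mul,
    smashCounit_tmul] at h
  have h0 : (Coalgebra.counit : A →ₗ[k] k) 1 ≠ 0 :=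
    left_ne_zero_of_mul_eq_one (counit_one_eq k A B σ τ hsb)
  apply mul_left_cancel₀ h0
  rw [h]; ring

lemma counitA_mul (hsb : IsSmashBiproduct k A B σ τ) (a a' : A) :
    (Coalgebra.counit : A →ₗ[k] k) (a * a')
      = (Coalgebra.counit : B →ₗ[k] k) 1 *
        ((Coalgebra.counit : A →ₗ[k] k) a * (Coalgebra.counit : A →ₗ[k] k) a') := by
  have h := hsb.counit_mul (a ⊗ₜ[k] (1:B)) (a' ⊗ₜ[k] (1:B))
  rw [smashMul_tmul, hsb.sigma_one_right, TensorProduct.map_tmul] at h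
  simp only [LinearMap.mulLeft_apply, LinearMap.mulRight_apply, mul_one,
    smashCounit_tmul] at h
  have h0 : (Coalgebra.counit : B →ₗ[k] k) 1 ≠ 0 :=
    right_ne_zero_of_mul_eq_one (counit_one_eq k A B σ τ hsb)
  apply mul_right_cancel₀ h0
  rw [h]; ring

lemma tau_scalar (hsb : IsSmashBiproduct k A B σ τ) (a : A) (b : B) :
    LinearMap.mul' k k (TensorProduct.map (Coalgebra.counit : B →ₗ[k] k)
        (Coalgebra.counit : A →ₗ[k] k) (τ (a ⊗ₜ[k] b)))
      = (Coalgebra.counit : A →ₗ[k] k) a * (Coalgebra.counit : B →ₗ[k] k) b := by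
  have key : ∀ x : B ⊗[k] A,
      LinearMap.mul' k k (TensorProduct.map (Coalgebra.counit : B →ₗ[k] k)
        (Coalgebra.counit : A →ₗ[k] k) x)
      = (Coalgebra.counit : A →ₗ[k] k)
          ((TensorProduct.lid k A)
            ((LinearMap.rTensor A (Coalgebra.counit : B →ₗ[k] k)) x)) := by
    intro x
    induction x using TensorProduct.induction_on with
    | zero => simp
    | tmul u v => simp [LinearMap.mul'_apply, LinearMap.rTensor_tmul, mul_comm]
    | add x y hx hy => simp [hx, hy]
  rw [key, hsb.tau_counit_left]
  simp [mul_comm]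

lemma P_assoc_aux (x : A) (w : B) (c : B ⊗[k] A) :
    TensorProduct.map (piA k A B) (piB k A B)
      ((TensorProduct.assoc k A B (A ⊗[k] B)).symm
        (x ⊗ₜ[k] ((TensorProduct.assoc k B A B) (c ⊗ₜ[k] w))))
      = (LinearMap.mul' k k (TensorProduct.map (Coalgebra.counit : B →ₗ[k] k)
          (Coalgebra.counit : A →ₗ[k] k) c)) • (x ⊗ₜ[k] w) := by
  induction c using TensorProduct.induction_on with
  | zero => simp
  | tmul u v =>
      simp only [TensorProduct.assoc_tmul, TensorProduct.assoc_symm_tmul,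
        TensorProduct.map_tmul, piA_tmul, piB_tmul, LinearMap.mul'_apply,
        TensorProduct.smul_tmul', TensorProduct.tmul_smul, smul_smul]
      rw [mul_comm]
  | add c₁ c₂ h₁ h₂ =>
      simp only [add_tmul, map_add, tmul_add, h₁, h₂, add_smul]

lemma P_smashComul (hsb : IsSmashBiproduct k A B σ τ) :
    ∀ x : A ⊗[k] B,
      TensorProduct.map (piA k A B) (piB k A B) (smashComul k A B τ x) = x := by
  have L0 : (TensorProduct.map (piA k A B) (piB k A B)) ∘ₗ
      ((TensorProduct.assoc k A B (A ⊗[k] B)).symm.toLinearMap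
        ∘ₗ (TensorProduct.map LinearMap.id
            ((TensorProduct.assoc k B A B).toLinearMap
              ∘ₗ (TensorProduct.map τ LinearMap.id)
              ∘ₗ (TensorProduct.assoc k A B B).symm.toLinearMap))
        ∘ₗ (TensorProduct.assoc k A A (B ⊗[k] B)).toLinearMap) =
      TensorProduct.map
        ((TensorProduct.rid k A).toLinearMap ∘ₗ
          LinearMap.lTensor A (Coalgebra.counit : A →ₗ[k] k))
        ((TensorProduct.lid k B).toLinearMap ∘ₗ
          LinearMap.rTensor B (Coalgebra.counit : B →ₗ[k] k)) := by
    apply TensorProduct.ext_fourfold'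
    intro x y u v
    simp only [LinearMap.coe_comp, Function.comp_apply, LinearEquiv.coe_coe,
      TensorProduct.assoc_tmul, TensorProduct.map_tmul, LinearMap.id_coe, id_eq,
      TensorProduct.assoc_symm_tmul, LinearMap.lTensor_tmul, LinearMap.rTensor_tmul,
      TensorProduct.rid_tmul, TensorProduct.lid_tmul]
    rw [P_assoc_aux, tau_scalar k A B σ τ hsb]
    simp [TensorProduct.smul_tmul', smul_smul, mul_comm]
  have hA : ((TensorProduct.rid k A).toLinearMap ∘ₗ
      LinearMap.lTensor A (Coalgebra.counit : A →ₗ[k] k)) ∘ₗ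
      (Coalgebra.comul : A →ₗ[k] A ⊗[k] A) = LinearMap.id := by
    apply LinearMap.ext; intro a
    simp [Coalgebra.lTensor_counit_comul]
  have hB : ((TensorProduct.lid k B).toLinearMap ∘ₗ
      LinearMap.rTensor B (Coalgebra.counit : B →ₗ[k] k)) ∘ₗ
      (Coalgebra.comul : B →ₗ[k] B ⊗[k] B) = LinearMap.id := by
    apply LinearMap.ext; intro b
    simp [Coalgebra.rTensor_counit_comul]
  intro x
  have h0 := LinearMap.congr_fun L0
    ((TensorProduct.map (Coalgebra.comul : A →ₗ[k] A ⊗[k] A)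
      (Coalgebra.comul : B →ₗ[k] B ⊗[k] B)) x)
  calc TensorProduct.map (piA k A B) (piB k A B) (smashComul k A B τ x)
      = TensorProduct.map
        ((TensorProduct.rid k A).toLinearMap ∘ₗ
          LinearMap.lTensor A (Coalgebra.counit : A →ₗ[k] k))
        ((TensorProduct.lid k B).toLinearMap ∘ₗ
          LinearMap.rTensor B (Coalgebra.counit : B →ₗ[k] k))
        ((TensorProduct.map (Coalgebra.comul : A →ₗ[k] A ⊗[k] A)
          (Coalgebra.comul : B →ₗ[k] B ⊗[k] B)) x) := h0
    _ = x := by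
        have h2 := LinearMap.congr_fun (TensorProduct.map_comp
          ((TensorProduct.rid k A).toLinearMap ∘ₗ
            LinearMap.lTensor A (Coalgebra.counit : A →ₗ[k] k))
          ((TensorProduct.lid k B).toLinearMap ∘ₗ
            LinearMap.rTensor B (Coalgebra.counit : B →ₗ[k] k))
          (Coalgebra.comul : A →ₗ[k] A ⊗[k] A)
          (Coalgebra.comul : B →ₗ[k] B ⊗[k] B)) x
        simp only [LinearMap.coe_comp, Function.comp_apply] at h2
        rw [← h2, hA, hB]
        simp [TensorProduct.map_id]

end Helpers
lemma map_smul_smul {M N P Q : Type*} [AddCommGroup M] [Module k M]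
    [AddCommGroup N] [Module k N] [AddCommGroup P] [Module k P]
    [AddCommGroup Q] [Module k Q] (c d : k) (f : M →ₗ[k] P) (g : N →ₗ[k] Q) :
    TensorProduct.map (c • f) (d • g) = (c * d) • TensorProduct.map f g := by
  apply TensorProduct.ext'
  intro m n
  simp [TensorProduct.smul_tmul', TensorProduct.tmul_smul, smul_smul, mul_comm]

lemma piA_smashMul (hsb : IsSmashBiproduct k A B σ τ) (hlc : LeftConormal k A B σ) :
    (piA k A B) ∘ₗ smashMul k A B σ
      = ((Coalgebra.counit : A →ₗ[k] k) 1) •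
          (LinearMap.mul' k A ∘ₗ TensorProduct.map (piA k A B) (piA k A B)) := by
  apply TensorProduct.ext_fourfold'
  intro x y x' y'
  simp only [LinearMap.coe_comp, Function.comp_apply, LinearMap.smul_apply]
  rw [smashMul_tmul]
  have aux : ∀ c : A ⊗[k] B,
      piA k A B (TensorProduct.map (LinearMap.mulLeft k x) (LinearMap.mulRight k y') c)
        = ((Coalgebra.counit : A →ₗ[k] k) 1 * (Coalgebra.counit : B →ₗ[k] k) y') •
            (x * (TensorProduct.rid k A)
              ((LinearMap.lTensor A (Coalgebra.counit : B →ₗ[k] k)) c)) := by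
    intro c
    induction c using TensorProduct.induction_on with
    | zero => simp
    | tmul s₁ s₂ =>
        simp only [TensorProduct.map_tmul, LinearMap.mulLeft_apply,
          LinearMap.mulRight_apply, piA_tmul, LinearMap.lTensor_tmul,
          TensorProduct.rid_tmul]
        rw [counitB_mul k A B σ τ hsb, mul_smul_comm, smul_smul]
        congr 1
        ring
    | add c₁ c₂ h₁ h₂ => simp [mul_add, add_mul, h₁, h₂, smul_add]
  rw [aux (σ (y ⊗ₜ[k] x')), hlc y x']
  simp only [TensorProduct.map_tmul, piA_tmul, LinearMap.mul'_apply]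
  rw [mul_smul_comm, smul_smul, smul_mul_assoc, mul_smul_comm, smul_smul, smul_smul]
  congr 1
  ring

lemma piB_smashMul (hsb : IsSmashBiproduct k A B σ τ) (hrc : RightConormal k A B σ) :
    (piB k A B) ∘ₗ smashMul k A B σ
      = ((Coalgebra.counit : B →ₗ[k] k) 1) •
          (LinearMap.mul' k B ∘ₗ TensorProduct.map (piB k A B) (piB k A B)) := by
  apply TensorProduct.ext_fourfold'
  intro x y x' y'
  simp only [LinearMap.coe_comp, Function.comp_apply, LinearMap.smul_apply]
  rw [smashMul_tmul]
  have aux : ∀ c : A ⊗[k] B,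
      piB k A B (TensorProduct.map (LinearMap.mulLeft k x) (LinearMap.mulRight k y') c)
        = ((Coalgebra.counit : B →ₗ[k] k) 1 * (Coalgebra.counit : A →ₗ[k] k) x) •
            (((TensorProduct.lid k B)
              ((LinearMap.rTensor B (Coalgebra.counit : A →ₗ[k] k)) c)) * y') := by
    intro c
    induction c using TensorProduct.induction_on with
    | zero => simp
    | tmul s₁ s₂ =>
        simp only [TensorProduct.map_tmul, LinearMap.mulLeft_apply,
          LinearMap.mulRight_apply, piB_tmul, LinearMap.rTensor_tmul,
          TensorProduct.lid_tmul]
        rw [counitA_mul k A B σ τ hsb, smul_mul_assoc, smul_smul]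
        congr 1
        ring
    | add c₁ c₂ h₁ h₂ => simp [mul_add, add_mul, h₁, h₂, smul_add]
  rw [aux (σ (y ⊗ₜ[k] x')), hrc y x']
  simp only [TensorProduct.map_tmul, piB_tmul, LinearMap.mul'_apply]
  rw [smul_mul_assoc, smul_smul, mul_smul_comm, smul_mul_assoc, smul_smul, smul_smul]
  congr 1
  ring

lemma ttc_nat :
    TensorProduct.map
        (TensorProduct.map (piA k A B) (piA k A B))
        (TensorProduct.map (piB k A B) (piB k A B)) ∘ₗ
      (TensorProduct.tensorTensorTensorComm k (A ⊗[k] B) (A ⊗[k] B)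
        (A ⊗[k] B) (A ⊗[k] B)).toLinearMap
    = (TensorProduct.tensorTensorTensorComm k A B A B).toLinearMap ∘ₗ
        TensorProduct.map
          (TensorProduct.map (piA k A B) (piB k A B))
          (TensorProduct.map (piA k A B) (piB k A B)) := by
  apply TensorProduct.ext_fourfold'
  intro h₁ h₂ h₃ h₄
  simp only [LinearMap.coe_comp, Function.comp_apply, LinearEquiv.coe_coe,
    TensorProduct.tensorTensorTensorComm_tmul, TensorProduct.map_tmul]
/-- If `σ` is both left and right conormal, then `σ` is the tensor flip. -/
theorem stmt10 (hsb : IsSmashBiproduct k A B σ τ)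
    (hlc : LeftConormal k A B σ) (hrc : RightConormal k A B σ) :
    ∀ (a : A) (b : B), σ (b ⊗ₜ[k] a) = a ⊗ₜ[k] b := by
  intro a b
  have hm : smashMul k A B σ (((1:A) ⊗ₜ[k] b) ⊗ₜ[k] (a ⊗ₜ[k] (1:B)))
      = σ (b ⊗ₜ[k] a) := by
    rw [smashMul_tmul, LinearMap.mulLeft_one, LinearMap.mulRight_one,
      TensorProduct.map_id]
    rfl
  have key := hsb.comul_mul ((1:A) ⊗ₜ[k] b) (a ⊗ₜ[k] (1:B))
  rw [hm] at key
  have e1 := (P_smashComul k A B σ τ hsb (σ (b ⊗ₜ[k] a))).symm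
  rw [key] at e1
  rw [e1]
  have e2 : mul2 k (A ⊗[k] B) (smashMul k A B σ)
        ((smashComul k A B τ ((1:A) ⊗ₜ[k] b)) ⊗ₜ[k]
          (smashComul k A B τ (a ⊗ₜ[k] (1:B))))
      = TensorProduct.map (smashMul k A B σ) (smashMul k A B σ)
          ((TensorProduct.tensorTensorTensorComm k (A ⊗[k] B) (A ⊗[k] B)
              (A ⊗[k] B) (A ⊗[k] B)).toLinearMap
            ((smashComul k A B τ ((1:A) ⊗ₜ[k] b)) ⊗ₜ[k]
              (smashComul k A B τ (a ⊗ₜ[k] (1:B))))) := rfl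
  rw [e2]
  generalize hw : (TensorProduct.tensorTensorTensorComm k (A ⊗[k] B) (A ⊗[k] B)
      (A ⊗[k] B) (A ⊗[k] B)).toLinearMap
      ((smashComul k A B τ ((1:A) ⊗ₜ[k] b)) ⊗ₜ[k]
        (smashComul k A B τ (a ⊗ₜ[k] (1:B)))) = w
  have e3 : TensorProduct.map (piA k A B) (piB k A B)
        (TensorProduct.map (smashMul k A B σ) (smashMul k A B σ) w)
      = TensorProduct.map ((piA k A B) ∘ₗ smashMul k A B σ)
          ((piB k A B) ∘ₗ smashMul k A B σ) w :=
    (LinearMap.congr_fun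
      (TensorProduct.map_comp (piA k A B) (piB k A B)
        (smashMul k A B σ) (smashMul k A B σ)) w).symm
  rw [e3, piA_smashMul k A B σ τ hsb hlc, piB_smashMul k A B σ τ hsb hrc,
    map_smul_smul, counit_one_eq k A B σ τ hsb, one_smul,
    TensorProduct.map_comp]
  simp only [LinearMap.coe_comp, Function.comp_apply]
  rw [← hw]
  have hnat := LinearMap.congr_fun (ttc_nat k A B)
    ((smashComul k A B τ ((1:A) ⊗ₜ[k] b)) ⊗ₜ[k]
      (smashComul k A B τ (a ⊗ₜ[k] (1:B))))
  simp only [LinearMap.coe_comp, Function.comp_apply, LinearEquiv.coe_coe] at hnat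
  simp only [LinearEquiv.coe_coe]
  rw [hnat]
  simp only [LinearMap.coe_comp, Function.comp_apply, TensorProduct.map_tmul]
  rw [P_smashComul k A B σ τ hsb, P_smashComul k A B σ τ hsb]
  simp [TensorProduct.tensorTensorTensorComm_tmul, LinearMap.mul'_apply]

end
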